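/- Let q be a positive integer and work over the ring of Laurent polynomials ℂ[λ, λ⁻¹]. Index x-, y- and z-variables by {0, 1, …, q+1}. For 1 ≤ i ≤ q define u_i, v_i, w_i ∈ (ℂ[λ,λ⁻¹])^{q+2} by u_i = e₀ + λ·e_i (and similarly v_i, w_i); define u' = e₀ + λ²·(e₁ + ⋯ + e_q) (similarly v', w'); and define u'' = e₀ + λ³·e_{q+1} (similarly v'', w''), where e_j is the j-th standard basis vector. Consider the tensor D on {0,…,q+1}³ with entries in ℂ[λ,λ⁻¹] given by D(a,b,c) = Σ_{i=1}^{q} λ⁻² · u_i(a)·v_i(b)·w_i(c) − λ⁻³ · u'(a)·v'(b)·w'(c) + (λ⁻³ − q·λ⁻²) · u''(a)·v''(b)·w''(c). Then for every (a,b,c), the Laurent polynomial D(a,b,c) − CW_q(a,b,c) has vanishing coefficients in all degrees ≤ 0; i.e., D equals CW_q plus terms of strictly positive degree in λ. In particular CW_q is a sum of q+2 rank-one tensors up to O(λ) error, so the border rank of CW_q is at most q+2. -/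

import Mathlib

open LaurentPolynomial

/-- The Coppersmith–Winograd tensor `CW_q` on `{0,…,q+1}³`: equal to `1` exactly on the triples
`(0,i,i)`, `(i,0,i)`, `(i,i,0)` for `1 ≤ i ≤ q` and on `(0,0,q+1)`, `(0,q+1,0)`, `(q+1,0,0)`,
and `0` otherwise. -/
def CWtensor (q : ℕ) : Fin (q + 2) × Fin (q + 2) × Fin (q + 2) → ℂ :=
  fun v =>
    if ((v.1 : ℕ) = 0 ∧ v.2.1 = v.2.2 ∧ 1 ≤ (v.2.1 : ℕ) ∧ (v.2.1 : ℕ) ≤ q) ∨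
       ((v.2.1 : ℕ) = 0 ∧ v.1 = v.2.2 ∧ 1 ≤ (v.1 : ℕ) ∧ (v.1 : ℕ) ≤ q) ∨
       ((v.2.2 : ℕ) = 0 ∧ v.1 = v.2.1 ∧ 1 ≤ (v.1 : ℕ) ∧ (v.1 : ℕ) ≤ q) ∨
       ((v.1 : ℕ) = 0 ∧ (v.2.1 : ℕ) = 0 ∧ (v.2.2 : ℕ) = q + 1) ∨
       ((v.1 : ℕ) = 0 ∧ (v.2.1 : ℕ) = q + 1 ∧ (v.2.2 : ℕ) = 0) ∨
       ((v.1 : ℕ) = q + 1 ∧ (v.2.1 : ℕ) = 0 ∧ (v.2.2 : ℕ) = 0)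
    then 1 else 0

/-- The vector `u_i = e₀ + λ·e_i` (for `1 ≤ i ≤ q`, indexed by `i : Fin q`). -/
noncomputable def cwVec (q : ℕ) (i : Fin q) : Fin (q + 2) → LaurentPolynomial ℂ :=
  fun a => (if (a : ℕ) = 0 then 1 else 0) + T 1 * (if (a : ℕ) = (i : ℕ) + 1 then 1 else 0)

/-- The vector `u' = e₀ + λ²·(e₁ + ⋯ + e_q)`. -/
noncomputable def cwVec' (q : ℕ) : Fin (q + 2) → LaurentPolynomial ℂ :=
  fun a => (if (a : ℕ) = 0 then 1 else 0) +
    T 2 * (if 1 ≤ (a : ℕ) ∧ (a : ℕ) ≤ q then 1 else 0)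

/-- The vector `u'' = e₀ + λ³·e_{q+1}`. -/
noncomputable def cwVec'' (q : ℕ) : Fin (q + 2) → LaurentPolynomial ℂ :=
  fun a => (if (a : ℕ) = 0 then 1 else 0) + T 3 * (if (a : ℕ) = q + 1 then 1 else 0)

/-- The Coppersmith–Winograd border-rank-`(q+2)` approximation tensor
`D(a,b,c) = Σ_{i=1}^{q} λ⁻²·u_i(a)·u_i(b)·u_i(c) − λ⁻³·u'(a)·u'(b)·u'(c)
  + (λ⁻³ − q·λ⁻²)·u''(a)·u''(b)·u''(c)`. -/
noncomputable def cwApprox (q : ℕ) :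
    Fin (q + 2) × Fin (q + 2) × Fin (q + 2) → LaurentPolynomial ℂ :=
  fun v =>
    (∑ i : Fin q, T (-2) * cwVec q i v.1 * cwVec q i v.2.1 * cwVec q i v.2.2)
      - T (-3) * cwVec' q v.1 * cwVec' q v.2.1 * cwVec' q v.2.2
      + (T (-3) - (q : LaurentPolynomial ℂ) * T (-2)) *
          cwVec'' q v.1 * cwVec'' q v.2.1 * cwVec'' q v.2.2

/-- The approximation `D` equals `CW_q` plus terms of strictly positive degree in `λ`:
every coefficient of `D(a,b,c) − CW_q(a,b,c)` in degree `≤ 0` vanishes. In particular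
`CW_q` is a sum of `q+2` rank-one tensors up to `O(λ)` error, so `R̲(CW_q) ≤ q+2`. -/

private lemma ind_sum (q m : ℕ) :
    (∑ i : Fin q, (if m = (i : ℕ) + 1 then (1:ℂ) else 0)) =
      if 1 ≤ m ∧ m ≤ q then 1 else 0 := by
  by_cases h : 1 ≤ m ∧ m ≤ q
  · obtain ⟨h1, h2⟩ := h
    rw [if_pos ⟨h1, h2⟩]
    have he : ∀ i : Fin q, (m = (i:ℕ)+1) ↔ i = ⟨m-1, by omega⟩ := by
      intro i
      rw [Fin.ext_iff]
      simp only []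
      omega
    simp_rw [he]
    simp
  · rw [if_neg h]
    apply Finset.sum_eq_zero
    intro i _
    rw [if_neg]
    intro hm; exact h ⟨by omega, by omega⟩

private lemma ind_sum2 (q m m' : ℕ) :
    (∑ i : Fin q, (if m = (i : ℕ) + 1 then (1:ℂ) else 0) * (if m' = (i : ℕ) + 1 then (1:ℂ) else 0)) =
      (if m = m' then (1:ℂ) else 0) * (if 1 ≤ m ∧ m ≤ q then 1 else 0) := by
  by_cases h : m = m'
  · subst h
    rw [if_pos rfl, one_mul, ← ind_sum q m]
    exact Finset.sum_congr rfl fun i _ => by split_ifs <;> simp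
  · rw [if_neg h, zero_mul]
    apply Finset.sum_eq_zero
    intro i _
    split_ifs <;> first | omega | ring

private lemma ind_sum3 (q m m' m'' : ℕ) :
    (∑ i : Fin q, (if m = (i : ℕ) + 1 then (1:ℂ) else 0) * (if m' = (i : ℕ) + 1 then (1:ℂ) else 0)
      * (if m'' = (i : ℕ) + 1 then (1:ℂ) else 0)) =
      (if m = m' then (1:ℂ) else 0) * (if m = m'' then (1:ℂ) else 0) *
        (if 1 ≤ m ∧ m ≤ q then 1 else 0) := by
  by_cases h : m = m' ∧ m = m''
  · obtain ⟨h1, h2⟩ := h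
    subst h1; subst h2
    rw [if_pos rfl, one_mul, one_mul, ← ind_sum q m]
    exact Finset.sum_congr rfl fun i _ => by split_ifs <;> simp
  · have h0 : (if m = m' then (1:ℂ) else 0) * (if m = m'' then (1:ℂ) else 0) = 0 := by
      split_ifs <;> first | (exfalso; exact h ⟨by omega, by omega⟩) | ring
    rw [h0, zero_mul]
    apply Finset.sum_eq_zero
    intro i _
    split_ifs <;> first | (exfalso; exact h ⟨by omega, by omega⟩) | ring

private lemma psum_ac (q m m' : ℕ) (u : ℂ) :
    (∑ i : Fin q, (if m = (i : ℕ) + 1 then (1:ℂ) else 0) * u * (if m' = (i : ℕ) + 1 then (1:ℂ) else 0)) =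
      (if m = m' then (1:ℂ) else 0) * (if 1 ≤ m ∧ m ≤ q then 1 else 0) * u := by
  rw [show (if m = m' then (1:ℂ) else 0) * (if 1 ≤ m ∧ m ≤ q then 1 else 0) * u
      = ((∑ i : Fin q, (if m = (i : ℕ) + 1 then (1:ℂ) else 0) * (if m' = (i : ℕ) + 1 then (1:ℂ) else 0))) * u by
    rw [ind_sum2]]
  rw [Finset.sum_mul]
  exact Finset.sum_congr rfl fun i _ => by ring

private lemma psum_bc (q m m' : ℕ) (u : ℂ) :
    (∑ i : Fin q, u * (if m = (i : ℕ) + 1 then (1:ℂ) else 0) * (if m' = (i : ℕ) + 1 then (1:ℂ) else 0)) =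
      u * ((if m = m' then (1:ℂ) else 0) * (if 1 ≤ m ∧ m ≤ q then 1 else 0)) := by
  rw [← ind_sum2, Finset.mul_sum]
  exact Finset.sum_congr rfl fun i _ => by ring

private lemma ite_C (P : Prop) [Decidable P] :
    (if P then (1:LaurentPolynomial ℂ) else 0) = C (if P then (1:ℂ) else 0) := by
  split_ifs <;> simp

private lemma expand3 (k s : ℤ) (x0 x1 y0 y1 z0 z1 : ℂ) :
    T k * (C x0 + T s * C x1) * (C y0 + T s * C y1) * (C z0 + T s * C z1) =
      C (x0*y0*z0) * T k + C (x1*y0*z0 + x0*y1*z0 + x0*y0*z1) * T (k+s)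
      + C (x1*y1*z0 + x1*y0*z1 + x0*y1*z1) * T (k+2*s)
      + C (x1*y1*z1) * T (k+3*s) := by
  have h2 : (k+2*s) = (k+s)+s := by ring
  have h3 : (k+3*s) = ((k+s)+s)+s := by ring
  rw [h2, h3]
  simp only [T_add, map_add, map_mul]
  ring

private lemma step1 (q : ℕ) (i : Fin q) (a b c : Fin (q+2)) :
    T (-2) * cwVec q i a * cwVec q i b * cwVec q i c =
      C ((if (a:ℕ)=0 then (1:ℂ) else 0)*(if (b:ℕ)=0 then (1:ℂ) else 0)*(if (c:ℕ)=0 then (1:ℂ) else 0)) * T (-2)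
      + C ((if (a:ℕ)=(i:ℕ)+1 then (1:ℂ) else 0)*(if (b:ℕ)=0 then (1:ℂ) else 0)*(if (c:ℕ)=0 then (1:ℂ) else 0)
          + (if (a:ℕ)=0 then (1:ℂ) else 0)*(if (b:ℕ)=(i:ℕ)+1 then (1:ℂ) else 0)*(if (c:ℕ)=0 then (1:ℂ) else 0)
          + (if (a:ℕ)=0 then (1:ℂ) else 0)*(if (b:ℕ)=0 then (1:ℂ) else 0)*(if (c:ℕ)=(i:ℕ)+1 then (1:ℂ) else 0)) * T (-1)
      + C ((if (a:ℕ)=(i:ℕ)+1 then (1:ℂ) else 0)*(if (b:ℕ)=(i:ℕ)+1 then (1:ℂ) else 0)*(if (c:ℕ)=0 then (1:ℂ) else 0)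
          + (if (a:ℕ)=(i:ℕ)+1 then (1:ℂ) else 0)*(if (b:ℕ)=0 then (1:ℂ) else 0)*(if (c:ℕ)=(i:ℕ)+1 then (1:ℂ) else 0)
          + (if (a:ℕ)=0 then (1:ℂ) else 0)*(if (b:ℕ)=(i:ℕ)+1 then (1:ℂ) else 0)*(if (c:ℕ)=(i:ℕ)+1 then (1:ℂ) else 0)) * T 0
      + C ((if (a:ℕ)=(i:ℕ)+1 then (1:ℂ) else 0)*(if (b:ℕ)=(i:ℕ)+1 then (1:ℂ) else 0)*(if (c:ℕ)=(i:ℕ)+1 then (1:ℂ) else 0)) * T 1 := by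
  have h := expand3 (-2) 1 (if (a:ℕ)=0 then (1:ℂ) else 0) (if (a:ℕ)=(i:ℕ)+1 then (1:ℂ) else 0)
    (if (b:ℕ)=0 then (1:ℂ) else 0) (if (b:ℕ)=(i:ℕ)+1 then (1:ℂ) else 0)
    (if (c:ℕ)=0 then (1:ℂ) else 0) (if (c:ℕ)=(i:ℕ)+1 then (1:ℂ) else 0)
  rw [show (-2:ℤ)+1 = -1 by norm_num, show (-2:ℤ)+2*1 = 0 by norm_num,
    show (-2:ℤ)+3*1 = 1 by norm_num] at h
  simp only [cwVec, ite_C]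
  exact h

private lemma ind_or (P Q : Prop) [Decidable P] [Decidable Q] (h : P → Q → False) :
    (if P ∨ Q then (1:ℂ) else 0) = (if P then 1 else 0) + (if Q then 1 else 0) := by
  by_cases hP : P <;> by_cases hQ : Q <;> simp [hP, hQ]
  exact h hP hQ

private lemma CW_split (q : ℕ) (a b c : Fin (q+2)) :
    CWtensor q (a,b,c) =
      (if (a:ℕ) = 0 then (1:ℂ) else 0) * (if (b:ℕ) = (c:ℕ) then (1:ℂ) else 0) *
        (if 1 ≤ (b:ℕ) ∧ (b:ℕ) ≤ q then (1:ℂ) else 0)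
      + (if (b:ℕ) = 0 then (1:ℂ) else 0) * (if (a:ℕ) = (c:ℕ) then (1:ℂ) else 0) *
        (if 1 ≤ (a:ℕ) ∧ (a:ℕ) ≤ q then (1:ℂ) else 0)
      + (if (c:ℕ) = 0 then (1:ℂ) else 0) * (if (a:ℕ) = (b:ℕ) then (1:ℂ) else 0) *
        (if 1 ≤ (a:ℕ) ∧ (a:ℕ) ≤ q then (1:ℂ) else 0)
      + (if (a:ℕ) = 0 then (1:ℂ) else 0) * (if (b:ℕ) = 0 then (1:ℂ) else 0) *
        (if (c:ℕ) = q+1 then (1:ℂ) else 0)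
      + (if (a:ℕ) = 0 then (1:ℂ) else 0) * (if (b:ℕ) = q+1 then (1:ℂ) else 0) *
        (if (c:ℕ) = 0 then (1:ℂ) else 0)
      + (if (a:ℕ) = q+1 then (1:ℂ) else 0) * (if (b:ℕ) = 0 then (1:ℂ) else 0) *
        (if (c:ℕ) = 0 then (1:ℂ) else 0) := by
  simp only [CWtensor, Fin.ext_iff, ite_zero_mul_ite_zero, one_mul, mul_one, and_assoc]
  rw [ind_or _ _ (by omega), ind_or _ _ (by omega), ind_or _ _ (by omega),
    ind_or _ _ (by omega), ind_or _ _ (by omega)]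
  ring

private lemma hsum_lemma (q : ℕ) (a b c : Fin (q+2)) :
    (∑ i : Fin q, T (-2) * cwVec q i a * cwVec q i b * cwVec q i c) =
      C ((q:ℂ) * ((if (a:ℕ)=0 then (1:ℂ) else 0)*(if (b:ℕ)=0 then (1:ℂ) else 0)*(if (c:ℕ)=0 then (1:ℂ) else 0))) * T (-2)
      + C ((if 1 ≤ (a:ℕ) ∧ (a:ℕ) ≤ q then (1:ℂ) else 0)*(if (b:ℕ)=0 then (1:ℂ) else 0)*(if (c:ℕ)=0 then (1:ℂ) else 0)
          + (if (a:ℕ)=0 then (1:ℂ) else 0)*(if 1 ≤ (b:ℕ) ∧ (b:ℕ) ≤ q then (1:ℂ) else 0)*(if (c:ℕ)=0 then (1:ℂ) else 0)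
          + (if (a:ℕ)=0 then (1:ℂ) else 0)*(if (b:ℕ)=0 then (1:ℂ) else 0)*(if 1 ≤ (c:ℕ) ∧ (c:ℕ) ≤ q then (1:ℂ) else 0)) * T (-1)
      + C ((if (a:ℕ)=(b:ℕ) then (1:ℂ) else 0)*(if 1 ≤ (a:ℕ) ∧ (a:ℕ) ≤ q then (1:ℂ) else 0)*(if (c:ℕ)=0 then (1:ℂ) else 0)
          + (if (a:ℕ)=(c:ℕ) then (1:ℂ) else 0)*(if 1 ≤ (a:ℕ) ∧ (a:ℕ) ≤ q then (1:ℂ) else 0)*(if (b:ℕ)=0 then (1:ℂ) else 0)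
          + (if (a:ℕ)=0 then (1:ℂ) else 0)*((if (b:ℕ)=(c:ℕ) then (1:ℂ) else 0)*(if 1 ≤ (b:ℕ) ∧ (b:ℕ) ≤ q then (1:ℂ) else 0))) * T 0
      + C ((if (a:ℕ)=(b:ℕ) then (1:ℂ) else 0)*(if (a:ℕ)=(c:ℕ) then (1:ℂ) else 0)*(if 1 ≤ (a:ℕ) ∧ (a:ℕ) ≤ q then (1:ℂ) else 0)) * T 1 := by
  rw [Finset.sum_congr rfl (fun i _ => step1 q i a b c)]
  simp only [Finset.sum_add_distrib, ← Finset.sum_mul, ← Finset.mul_sum, ← map_sum]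
  simp only [ind_sum, ind_sum2, ind_sum3, psum_ac, psum_bc, Finset.sum_const,
    Finset.card_univ, Fintype.card_fin, nsmul_eq_mul]
  simp only [map_add, map_mul, map_natCast]
  ring

private lemma key (q : ℕ) (a b c : Fin (q+2)) :
    cwApprox q (a,b,c) =
      C (CWtensor q (a,b,c))
      + C ((if (a:ℕ)=(b:ℕ) then (1:ℂ) else 0)*(if (a:ℕ)=(c:ℕ) then (1:ℂ) else 0)*(if 1 ≤ (a:ℕ) ∧ (a:ℕ) ≤ q then (1:ℂ) else 0)
          - ((if 1 ≤ (a:ℕ) ∧ (a:ℕ) ≤ q then (1:ℂ) else 0)*(if 1 ≤ (b:ℕ) ∧ (b:ℕ) ≤ q then (1:ℂ) else 0)*(if (c:ℕ)=0 then (1:ℂ) else 0)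
            + (if 1 ≤ (a:ℕ) ∧ (a:ℕ) ≤ q then (1:ℂ) else 0)*(if (b:ℕ)=0 then (1:ℂ) else 0)*(if 1 ≤ (c:ℕ) ∧ (c:ℕ) ≤ q then (1:ℂ) else 0)
            + (if (a:ℕ)=0 then (1:ℂ) else 0)*(if 1 ≤ (b:ℕ) ∧ (b:ℕ) ≤ q then (1:ℂ) else 0)*(if 1 ≤ (c:ℕ) ∧ (c:ℕ) ≤ q then (1:ℂ) else 0))
          - (q:ℂ)*((if (a:ℕ)=q+1 then (1:ℂ) else 0)*(if (b:ℕ)=0 then (1:ℂ) else 0)*(if (c:ℕ)=0 then (1:ℂ) else 0)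
            + (if (a:ℕ)=0 then (1:ℂ) else 0)*(if (b:ℕ)=q+1 then (1:ℂ) else 0)*(if (c:ℕ)=0 then (1:ℂ) else 0)
            + (if (a:ℕ)=0 then (1:ℂ) else 0)*(if (b:ℕ)=0 then (1:ℂ) else 0)*(if (c:ℕ)=q+1 then (1:ℂ) else 0))) * T 1
      + C (-((if 1 ≤ (a:ℕ) ∧ (a:ℕ) ≤ q then (1:ℂ) else 0)*(if 1 ≤ (b:ℕ) ∧ (b:ℕ) ≤ q then (1:ℂ) else 0)*(if 1 ≤ (c:ℕ) ∧ (c:ℕ) ≤ q then (1:ℂ) else 0))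
          + ((if (a:ℕ)=q+1 then (1:ℂ) else 0)*(if (b:ℕ)=q+1 then (1:ℂ) else 0)*(if (c:ℕ)=0 then (1:ℂ) else 0)
            + (if (a:ℕ)=q+1 then (1:ℂ) else 0)*(if (b:ℕ)=0 then (1:ℂ) else 0)*(if (c:ℕ)=q+1 then (1:ℂ) else 0)
            + (if (a:ℕ)=0 then (1:ℂ) else 0)*(if (b:ℕ)=q+1 then (1:ℂ) else 0)*(if (c:ℕ)=q+1 then (1:ℂ) else 0))) * T 3
      + C (-(q:ℂ)*((if (a:ℕ)=q+1 then (1:ℂ) else 0)*(if (b:ℕ)=q+1 then (1:ℂ) else 0)*(if (c:ℕ)=0 then (1:ℂ) else 0)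
            + (if (a:ℕ)=q+1 then (1:ℂ) else 0)*(if (b:ℕ)=0 then (1:ℂ) else 0)*(if (c:ℕ)=q+1 then (1:ℂ) else 0)
            + (if (a:ℕ)=0 then (1:ℂ) else 0)*(if (b:ℕ)=q+1 then (1:ℂ) else 0)*(if (c:ℕ)=q+1 then (1:ℂ) else 0))) * T 4
      + C ((if (a:ℕ)=q+1 then (1:ℂ) else 0)*(if (b:ℕ)=q+1 then (1:ℂ) else 0)*(if (c:ℕ)=q+1 then (1:ℂ) else 0)) * T 6
      + C (-(q:ℂ)*((if (a:ℕ)=q+1 then (1:ℂ) else 0)*(if (b:ℕ)=q+1 then (1:ℂ) else 0)*(if (c:ℕ)=q+1 then (1:ℂ) else 0))) * T 7 := by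
  have hu' : T (-3) * cwVec' q a * cwVec' q b * cwVec' q c =
      C ((if (a:ℕ)=0 then (1:ℂ) else 0)*(if (b:ℕ)=0 then (1:ℂ) else 0)*(if (c:ℕ)=0 then (1:ℂ) else 0)) * T (-3)
      + C ((if 1 ≤ (a:ℕ) ∧ (a:ℕ) ≤ q then (1:ℂ) else 0)*(if (b:ℕ)=0 then (1:ℂ) else 0)*(if (c:ℕ)=0 then (1:ℂ) else 0)
          + (if (a:ℕ)=0 then (1:ℂ) else 0)*(if 1 ≤ (b:ℕ) ∧ (b:ℕ) ≤ q then (1:ℂ) else 0)*(if (c:ℕ)=0 then (1:ℂ) else 0)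
          + (if (a:ℕ)=0 then (1:ℂ) else 0)*(if (b:ℕ)=0 then (1:ℂ) else 0)*(if 1 ≤ (c:ℕ) ∧ (c:ℕ) ≤ q then (1:ℂ) else 0)) * T (-1)
      + C ((if 1 ≤ (a:ℕ) ∧ (a:ℕ) ≤ q then (1:ℂ) else 0)*(if 1 ≤ (b:ℕ) ∧ (b:ℕ) ≤ q then (1:ℂ) else 0)*(if (c:ℕ)=0 then (1:ℂ) else 0)
          + (if 1 ≤ (a:ℕ) ∧ (a:ℕ) ≤ q then (1:ℂ) else 0)*(if (b:ℕ)=0 then (1:ℂ) else 0)*(if 1 ≤ (c:ℕ) ∧ (c:ℕ) ≤ q then (1:ℂ) else 0)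
          + (if (a:ℕ)=0 then (1:ℂ) else 0)*(if 1 ≤ (b:ℕ) ∧ (b:ℕ) ≤ q then (1:ℂ) else 0)*(if 1 ≤ (c:ℕ) ∧ (c:ℕ) ≤ q then (1:ℂ) else 0)) * T 1
      + C ((if 1 ≤ (a:ℕ) ∧ (a:ℕ) ≤ q then (1:ℂ) else 0)*(if 1 ≤ (b:ℕ) ∧ (b:ℕ) ≤ q then (1:ℂ) else 0)*(if 1 ≤ (c:ℕ) ∧ (c:ℕ) ≤ q then (1:ℂ) else 0)) * T 3 := by
    have h := expand3 (-3) 2 (if (a:ℕ)=0 then (1:ℂ) else 0) (if 1 ≤ (a:ℕ) ∧ (a:ℕ) ≤ q then (1:ℂ) else 0)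
      (if (b:ℕ)=0 then (1:ℂ) else 0) (if 1 ≤ (b:ℕ) ∧ (b:ℕ) ≤ q then (1:ℂ) else 0)
      (if (c:ℕ)=0 then (1:ℂ) else 0) (if 1 ≤ (c:ℕ) ∧ (c:ℕ) ≤ q then (1:ℂ) else 0)
    rw [show (-3:ℤ)+2 = -1 by norm_num, show (-3:ℤ)+2*2 = 1 by norm_num,
      show (-3:ℤ)+3*2 = 3 by norm_num] at h
    simp only [cwVec', ite_C]
    exact h
  have h3 : T (-3) * cwVec'' q a * cwVec'' q b * cwVec'' q c =
      C ((if (a:ℕ)=0 then (1:ℂ) else 0)*(if (b:ℕ)=0 then (1:ℂ) else 0)*(if (c:ℕ)=0 then (1:ℂ) else 0)) * T (-3)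
      + C ((if (a:ℕ)=q+1 then (1:ℂ) else 0)*(if (b:ℕ)=0 then (1:ℂ) else 0)*(if (c:ℕ)=0 then (1:ℂ) else 0)
          + (if (a:ℕ)=0 then (1:ℂ) else 0)*(if (b:ℕ)=q+1 then (1:ℂ) else 0)*(if (c:ℕ)=0 then (1:ℂ) else 0)
          + (if (a:ℕ)=0 then (1:ℂ) else 0)*(if (b:ℕ)=0 then (1:ℂ) else 0)*(if (c:ℕ)=q+1 then (1:ℂ) else 0)) * T 0
      + C ((if (a:ℕ)=q+1 then (1:ℂ) else 0)*(if (b:ℕ)=q+1 then (1:ℂ) else 0)*(if (c:ℕ)=0 then (1:ℂ) else 0)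
          + (if (a:ℕ)=q+1 then (1:ℂ) else 0)*(if (b:ℕ)=0 then (1:ℂ) else 0)*(if (c:ℕ)=q+1 then (1:ℂ) else 0)
          + (if (a:ℕ)=0 then (1:ℂ) else 0)*(if (b:ℕ)=q+1 then (1:ℂ) else 0)*(if (c:ℕ)=q+1 then (1:ℂ) else 0)) * T 3
      + C ((if (a:ℕ)=q+1 then (1:ℂ) else 0)*(if (b:ℕ)=q+1 then (1:ℂ) else 0)*(if (c:ℕ)=q+1 then (1:ℂ) else 0)) * T 6 := by
    have h := expand3 (-3) 3 (if (a:ℕ)=0 then (1:ℂ) else 0) (if (a:ℕ)=q+1 then (1:ℂ) else 0)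
      (if (b:ℕ)=0 then (1:ℂ) else 0) (if (b:ℕ)=q+1 then (1:ℂ) else 0)
      (if (c:ℕ)=0 then (1:ℂ) else 0) (if (c:ℕ)=q+1 then (1:ℂ) else 0)
    rw [show (-3:ℤ)+3 = 0 by norm_num, show (-3:ℤ)+2*3 = 3 by norm_num,
      show (-3:ℤ)+3*3 = 6 by norm_num] at h
    simp only [cwVec'', ite_C]
    exact h
  have h2 : T (-2) * cwVec'' q a * cwVec'' q b * cwVec'' q c =
      C ((if (a:ℕ)=0 then (1:ℂ) else 0)*(if (b:ℕ)=0 then (1:ℂ) else 0)*(if (c:ℕ)=0 then (1:ℂ) else 0)) * T (-2)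
      + C ((if (a:ℕ)=q+1 then (1:ℂ) else 0)*(if (b:ℕ)=0 then (1:ℂ) else 0)*(if (c:ℕ)=0 then (1:ℂ) else 0)
          + (if (a:ℕ)=0 then (1:ℂ) else 0)*(if (b:ℕ)=q+1 then (1:ℂ) else 0)*(if (c:ℕ)=0 then (1:ℂ) else 0)
          + (if (a:ℕ)=0 then (1:ℂ) else 0)*(if (b:ℕ)=0 then (1:ℂ) else 0)*(if (c:ℕ)=q+1 then (1:ℂ) else 0)) * T 1
      + C ((if (a:ℕ)=q+1 then (1:ℂ) else 0)*(if (b:ℕ)=q+1 then (1:ℂ) else 0)*(if (c:ℕ)=0 then (1:ℂ) else 0)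
          + (if (a:ℕ)=q+1 then (1:ℂ) else 0)*(if (b:ℕ)=0 then (1:ℂ) else 0)*(if (c:ℕ)=q+1 then (1:ℂ) else 0)
          + (if (a:ℕ)=0 then (1:ℂ) else 0)*(if (b:ℕ)=q+1 then (1:ℂ) else 0)*(if (c:ℕ)=q+1 then (1:ℂ) else 0)) * T 4
      + C ((if (a:ℕ)=q+1 then (1:ℂ) else 0)*(if (b:ℕ)=q+1 then (1:ℂ) else 0)*(if (c:ℕ)=q+1 then (1:ℂ) else 0)) * T 7 := by
    have h := expand3 (-2) 3 (if (a:ℕ)=0 then (1:ℂ) else 0) (if (a:ℕ)=q+1 then (1:ℂ) else 0)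
      (if (b:ℕ)=0 then (1:ℂ) else 0) (if (b:ℕ)=q+1 then (1:ℂ) else 0)
      (if (c:ℕ)=0 then (1:ℂ) else 0) (if (c:ℕ)=q+1 then (1:ℂ) else 0)
    rw [show (-2:ℤ)+3 = 1 by norm_num, show (-2:ℤ)+2*3 = 4 by norm_num,
      show (-2:ℤ)+3*3 = 7 by norm_num] at h
    simp only [cwVec'', ite_C]
    exact h
  have hdist : (T (-3) - (q : LaurentPolynomial ℂ) * T (-2)) * cwVec'' q a * cwVec'' q b * cwVec'' q c
      = T (-3) * cwVec'' q a * cwVec'' q b * cwVec'' q c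
        - (q : LaurentPolynomial ℂ) * (T (-2) * cwVec'' q a * cwVec'' q b * cwVec'' q c) := by
    ring
  simp only [cwApprox]
  rw [hsum_lemma q a b c, hdist, h3, h2, hu', CW_split q a b c]
  rw [show ((q : ℕ) : LaurentPolynomial ℂ) = C ((q:ℕ):ℂ) from (map_natCast C q).symm]
  simp only [map_add, map_mul, map_sub, map_neg, map_natCast, T_zero]
  ring

theorem cwApprox_sub_CWtensor_coeff_nonpos_eq_zero (q : ℕ) (hq : 0 < q)
    (a b c : Fin (q + 2)) (n : ℤ) (hn : n ≤ 0) :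
    (cwApprox q (a, b, c) - LaurentPolynomial.C (CWtensor q (a, b, c))).coeff n = 0 := by
  rw [key q a b c]
  have hcancel : ∀ x r1 r3 r4 r6 r7 : LaurentPolynomial ℂ,
      (x + r1 + r3 + r4 + r6 + r7) - x = r1 + r3 + r4 + r6 + r7 := fun _ _ _ _ _ _ => by ring
  rw [hcancel]
  simp only [← single_eq_C_mul_T]
  rw [show ((AddMonoidAlgebra.single 1 _ + AddMonoidAlgebra.single 3 _ + AddMonoidAlgebra.single 4 _
      + AddMonoidAlgebra.single 6 _ + AddMonoidAlgebra.single 7 _ : LaurentPolynomial ℂ)).coeff n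
    = Finsupp.single 1 _ n + Finsupp.single 3 _ n + Finsupp.single 4 _ n
      + Finsupp.single 6 _ n + Finsupp.single 7 _ n from rfl]
  rw [Finsupp.single_apply, Finsupp.single_apply, Finsupp.single_apply,
    Finsupp.single_apply, Finsupp.single_apply]
  rw [if_neg (by omega), if_neg (by omega), if_neg (by omega), if_neg (by omega),
    if_neg (by omega)]
  ring
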